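/- (Error of the Gaussian-averaged gradient.) Let d : ℕ, L ≥ 0 and μ ≥ 0, and let f : EuclideanSpace ℝ (Fin d) → ℝ have L-Lipschitz gradient. Then for every x, the map u ↦ ∇f(x + μ • u) is γ_d-Bochner-integrable, and ‖∫ ∇f(x + μ • u) ∂γ_d(u) − ∇f(x)‖ ≤ μ·L·√d; in particular ‖∫ ∇f(x + μ • u) ∂γ_d(u) − ∇f(x)‖ ≤ (μ/2)·L·(d+3)^{3/2}. -/

import Mathlib

open MeasureTheory RealInnerProductSpace Real

lemma integrable_sq_exp : Integrable fun x : ℝ => x ^ 2 * Real.exp (-(1/2) * x ^ 2) := by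
  have := integrable_rpow_mul_exp_neg_mul_sq (b := 1/2) (by norm_num) (s := 2) (by norm_num)
  simpa [Real.rpow_two] using this

lemma integral_sq_exp : ∫ x : ℝ, x ^ 2 * Real.exp (-(1/2) * x ^ 2) = Real.sqrt (2 * π) := by
  have hd : ∀ x : ℝ, HasDerivAt (fun x : ℝ => x * Real.exp (-(1/2) * x ^ 2))
      ((1 - x ^ 2) * Real.exp (-(1/2) * x ^ 2)) x := by
    intro x
    have h1 : HasDerivAt (fun x : ℝ => -(1/2) * x ^ 2) (-(1/2) * (2 * x)) x := by
      simpa using (hasDerivAt_pow 2 x).const_mul (-(1/2) : ℝ)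
    have h2 := ((h1.exp).const_mul 1).congr_deriv rfl
    have : HasDerivAt (fun x : ℝ => x * Real.exp (-(1/2) * x ^ 2)) _ x := (hasDerivAt_id x).mul h1.exp
    convert this using 1
    simp only [id]
    ring
  have hint' : Integrable fun x : ℝ => (1 - x ^ 2) * Real.exp (-(1/2) * x ^ 2) := by
    have h1 : Integrable fun x : ℝ => Real.exp (-(1/2) * x ^ 2) :=
      integrable_exp_neg_mul_sq (by norm_num)
    have := h1.sub integrable_sq_exp
    simpa [sub_mul, one_mul, Pi.sub_def] using this
  have hF : Integrable fun x : ℝ => x * Real.exp (-(1/2) * x ^ 2) :=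
    integrable_mul_exp_neg_mul_sq (by norm_num)
  have h0 := integral_eq_zero_of_hasDerivAt_of_integrable hd hint' hF
  have h1 : Integrable fun x : ℝ => Real.exp (-(1/2) * x ^ 2) :=
    integrable_exp_neg_mul_sq (by norm_num)
  have hsub : ∫ x : ℝ, (1 - x ^ 2) * Real.exp (-(1/2) * x ^ 2)
      = (∫ x : ℝ, Real.exp (-(1/2) * x ^ 2)) - ∫ x : ℝ, x ^ 2 * Real.exp (-(1/2) * x ^ 2) := by
    rw [← integral_sub h1 integrable_sq_exp]
    congr 1 with x
    ring
  have hg : ∫ x : ℝ, Real.exp (-(1/2) * x ^ 2) = Real.sqrt (2 * π) := by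
    rw [integral_gaussian]
    rw [show π / (1/2) = 2 * π by ring]
  rw [h0, hg] at hsub
  linarith [hsub]

open ProbabilityTheory in
lemma gaussianPDFReal_std (x : ℝ) :
    gaussianPDFReal 0 1 x = (Real.sqrt (2 * π))⁻¹ * Real.exp (-(1/2) * x ^ 2) := by
  simp only [gaussianPDFReal, NNReal.coe_one, mul_one, sub_zero]
  ring_nf

open ProbabilityTheory in
lemma pdf_smul_eq (g : ℝ → ℝ) :
    (fun x => (gaussianPDFReal 0 1 x).toNNReal • g x) =
      fun x => gaussianPDFReal 0 1 x * g x := by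
  ext x
  rw [NNReal.smul_def, Real.coe_toNNReal _ (gaussianPDFReal_nonneg 0 1 x)]
  rfl

open ProbabilityTheory in
lemma integrable_sq_gaussian : Integrable (fun x : ℝ => x ^ 2) (gaussianReal 0 1) := by
  rw [gaussianReal_of_var_ne_zero 0 one_ne_zero]
  have hmeas : Measurable fun x => (gaussianPDFReal 0 1 x).toNNReal :=
    (measurable_gaussianPDFReal 0 1).real_toNNReal
  rw [show gaussianPDF 0 1 = fun x => ((gaussianPDFReal 0 1 x).toNNReal : ENNReal) from rfl]
  rw [integrable_withDensity_iff_integrable_smul hmeas, pdf_smul_eq]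
  have : Integrable fun x : ℝ => (Real.sqrt (2 * π))⁻¹ * (x ^ 2 * Real.exp (-(1/2) * x ^ 2)) :=
    integrable_sq_exp.const_mul _
  refine this.congr (Filter.Eventually.of_forall fun x => ?_)
  simp only [gaussianPDFReal_std]
  ring

open ProbabilityTheory in
lemma integral_sq_gaussian : ∫ x : ℝ, x ^ 2 ∂(gaussianReal 0 1) = 1 := by
  rw [gaussianReal_of_var_ne_zero 0 one_ne_zero]
  have hmeas : Measurable fun x => (gaussianPDFReal 0 1 x).toNNReal :=
    (measurable_gaussianPDFReal 0 1).real_toNNReal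
  rw [show gaussianPDF 0 1 = fun x => ((gaussianPDFReal 0 1 x).toNNReal : ENNReal) from rfl]
  rw [integral_withDensity_eq_integral_smul hmeas, pdf_smul_eq]
  have heq : ∫ x : ℝ, gaussianPDFReal 0 1 x * x ^ 2
      = ∫ x : ℝ, (Real.sqrt (2 * π))⁻¹ * (x ^ 2 * Real.exp (-(1/2) * x ^ 2)) := by
    congr 1 with x
    rw [gaussianPDFReal_std]
    ring
  rw [heq, integral_const_mul, integral_sq_exp, inv_mul_cancel₀]
  positivity

/-- The standard Gaussian measure on `EuclideanSpace ℝ (Fin d)`, i.e. the product of `d`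
copies of the real standard Gaussian measure. -/
noncomputable def stdGaussian (d : ℕ) : Measure (EuclideanSpace ℝ (Fin d)) :=
  Measure.map (MeasurableEquiv.toLp 2 (Fin d → ℝ))
    (Measure.pi (fun _ : Fin d => ProbabilityTheory.gaussianReal 0 1))

instance (d : ℕ) : IsProbabilityMeasure (stdGaussian d) := by
  unfold stdGaussian
  exact Measure.isProbabilityMeasure_map (MeasurableEquiv.toLp 2 (Fin d → ℝ)).measurable.aemeasurable

open ProbabilityTheory in
lemma stdGaussian_map_eval (d : ℕ) (i : Fin d) :
    (stdGaussian d).map (fun u : EuclideanSpace ℝ (Fin d) => u i) = gaussianReal 0 1 := by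
  have h : (Measure.pi (fun _ : Fin d => gaussianReal 0 1) : Measure (Fin d → ℝ)).map
      (fun u => u i) = gaussianReal 0 1 := by
    ext s hs
    rw [Measure.map_apply (measurable_pi_apply i) hs]
    have h1 : (fun u : Fin d → ℝ => u i) ⁻¹' s
        = Set.pi Set.univ (Function.update (fun _ : Fin d => (Set.univ : Set ℝ)) i s) := by
      rw [← Set.eval_preimage]
    rw [h1, Measure.pi_pi]
    rw [Finset.prod_eq_single i]
    · simp
    · intro j _ hj
      simp [Function.update_of_ne hj]
    · simp
  rw [_root_.stdGaussian, Measure.map_map (g := fun u : EuclideanSpace ℝ (Fin d) => u i)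
    ((measurable_pi_apply i).comp (WithLp.measurable_ofLp 2 _))
    (MeasurableEquiv.toLp 2 (Fin d → ℝ)).measurable]
  exact h

open ProbabilityTheory in
lemma integrable_eval_sq (d : ℕ) (i : Fin d) :
    Integrable (fun u : EuclideanSpace ℝ (Fin d) => (u i) ^ 2) (stdGaussian d) := by
  have h := integrable_sq_gaussian
  rw [← stdGaussian_map_eval d i] at h
  have := (integrable_map_measure h.aestronglyMeasurable
    (Measurable.aemeasurable (by exact (measurable_pi_apply i).comp (WithLp.measurable_ofLp 2 _)))).mp h
  simpa [Function.comp_def] using this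

open ProbabilityTheory in
lemma integral_eval_sq (d : ℕ) (i : Fin d) :
    ∫ u : EuclideanSpace ℝ (Fin d), (u i) ^ 2 ∂(stdGaussian d) = 1 := by
  have h : ∫ x : ℝ, x ^ 2 ∂((stdGaussian d).map (fun u : EuclideanSpace ℝ (Fin d) => u i)) = 1 := by
    rw [stdGaussian_map_eval d i]; exact integral_sq_gaussian
  rwa [integral_map (Measurable.aemeasurable (by exact (measurable_pi_apply i).comp (WithLp.measurable_ofLp 2 _)))
    (by exact (measurable_id.pow_const 2).aestronglyMeasurable.mono_measure le_rfl |>.mono_measure le_rfl)] at h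

lemma norm_sq_eq_sum (d : ℕ) (u : EuclideanSpace ℝ (Fin d)) :
    ‖u‖ ^ 2 = ∑ i, (u i) ^ 2 := by
  rw [EuclideanSpace.norm_eq]
  rw [Real.sq_sqrt (Finset.sum_nonneg fun i _ => sq_nonneg _)]
  simp [Real.norm_eq_abs, sq_abs]

lemma integrable_norm_sq (d : ℕ) :
    Integrable (fun u : EuclideanSpace ℝ (Fin d) => ‖u‖ ^ 2) (stdGaussian d) := by
  have := integrable_finset_sum (μ := stdGaussian d) Finset.univ
    (fun i _ => integrable_eval_sq d i)
  exact this.congr (Filter.Eventually.of_forall fun u => (norm_sq_eq_sum d u).symm)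

lemma integral_norm_sq (d : ℕ) :
    ∫ u, ‖u‖ ^ 2 ∂(stdGaussian d) = d := by
  calc ∫ u, ‖u‖ ^ 2 ∂(stdGaussian d) = ∫ u, ∑ i, (u i) ^ 2 ∂(stdGaussian d) := by
        congr 1 with u; exact norm_sq_eq_sum d u
    _ = ∑ i : Fin d, ∫ u, (u i) ^ 2 ∂(stdGaussian d) :=
        integral_finset_sum _ (fun i _ => integrable_eval_sq d i)
    _ = d := by simp [integral_eval_sq]

lemma integrable_norm_std (d : ℕ) :
    Integrable (fun u : EuclideanSpace ℝ (Fin d) => ‖u‖) (stdGaussian d) := by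
  have hmem : MemLp (fun u : EuclideanSpace ℝ (Fin d) => ‖u‖) 2 (stdGaussian d) :=
    (memLp_two_iff_integrable_sq continuous_norm.aestronglyMeasurable).mpr (integrable_norm_sq d)
  exact hmem.integrable one_le_two

lemma integral_norm_le (d : ℕ) :
    ∫ u, ‖u‖ ∂(stdGaussian d) ≤ Real.sqrt d := by
  have hmem : MemLp (fun u : EuclideanSpace ℝ (Fin d) => ‖u‖) 2 (stdGaussian d) :=
    (memLp_two_iff_integrable_sq continuous_norm.aestronglyMeasurable).mpr (integrable_norm_sq d)
  have hvar := ProbabilityTheory.variance_nonneg (fun u : EuclideanSpace ℝ (Fin d) => ‖u‖)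
    (stdGaussian d)
  rw [ProbabilityTheory.variance_eq_sub hmem] at hvar
  simp only [Pi.pow_apply] at hvar
  rw [integral_norm_sq d] at hvar
  have hnn : 0 ≤ ∫ u, ‖u‖ ∂(stdGaussian d) := integral_nonneg fun u => norm_nonneg _
  exact (Real.le_sqrt hnn (Nat.cast_nonneg d)).mpr (by linarith)

/-- **Error of the Gaussian-averaged gradient.**
If `f` has `L`-Lipschitz gradient then for every `x` the map `u ↦ ∇f (x + μ • u)` is
Bochner-integrable against the standard Gaussian, and the Gaussian-averaged gradient differs
from `∇f(x)` by at most `μ·L·√d`; in particular by at most `(μ/2)·L·(d+3)^{3/2}`. -/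
theorem gaussian_averaged_gradient_error
    (d : ℕ) (L μ : ℝ) (hL : 0 ≤ L) (hμ : 0 ≤ μ)
    (f : EuclideanSpace ℝ (Fin d) → ℝ)
    (hdiff : Differentiable ℝ f)
    (hlip : ∀ x y, ‖gradient f x - gradient f y‖ ≤ L * ‖x - y‖) :
    ∀ x : EuclideanSpace ℝ (Fin d),
      Integrable (fun u => gradient f (x + μ • u)) (stdGaussian d) ∧
      ‖(∫ u, gradient f (x + μ • u) ∂(stdGaussian d)) - gradient f x‖ ≤
        μ * L * Real.sqrt d ∧
      ‖(∫ u, gradient f (x + μ • u) ∂(stdGaussian d)) - gradient f x‖ ≤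
        μ / 2 * L * ((d : ℝ) + 3) ^ ((3 : ℝ) / 2) := by
  intro x
  have hgc : Continuous (gradient f) := by
    have hlw : LipschitzWith (Real.toNNReal L) (gradient f) := by
      apply LipschitzWith.of_dist_le_mul
      intro a b
      rw [dist_eq_norm, dist_eq_norm, Real.coe_toNNReal L hL]
      exact hlip a b
    exact hlw.continuous
  have hmapc : Continuous fun u : EuclideanSpace ℝ (Fin d) => gradient f (x + μ • u) :=
    hgc.comp (continuous_const.add (continuous_id.const_smul μ))
  have hbound : ∀ u : EuclideanSpace ℝ (Fin d),
      ‖gradient f (x + μ • u) - gradient f x‖ ≤ L * (μ * ‖u‖) := by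
    intro u
    have := hlip (x + μ • u) x
    simpa [norm_smul, abs_of_nonneg hμ] using this
  have hint : Integrable (fun u => gradient f (x + μ • u)) (stdGaussian d) := by
    apply Integrable.mono'
      ((integrable_const ‖gradient f x‖).add ((integrable_norm_std d).const_mul (L * μ)))
      hmapc.aestronglyMeasurable
    refine Filter.Eventually.of_forall fun u => ?_
    calc ‖gradient f (x + μ • u)‖
        ≤ ‖gradient f x‖ + ‖gradient f (x + μ • u) - gradient f x‖ := by
          have := norm_add_le (gradient f x) (gradient f (x + μ • u) - gradient f x)
          simpa using this
      _ ≤ ‖gradient f x‖ + L * μ * ‖u‖ := by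
          have := hbound u
          rw [mul_assoc]
          linarith
  have hconst : ∫ _ : EuclideanSpace ℝ (Fin d), gradient f x ∂(stdGaussian d) = gradient f x := by
    simp
  have key : ‖(∫ u, gradient f (x + μ • u) ∂(stdGaussian d)) - gradient f x‖ ≤
      μ * L * Real.sqrt d := by
    rw [← hconst, ← integral_sub hint (integrable_const _)]
    calc ‖∫ u, (gradient f (x + μ • u) - gradient f x) ∂(stdGaussian d)‖
        ≤ ∫ u, ‖gradient f (x + μ • u) - gradient f x‖ ∂(stdGaussian d) :=
          norm_integral_le_integral_norm _
      _ ≤ ∫ u, L * (μ * ‖u‖) ∂(stdGaussian d) := by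
          apply integral_mono (hint.sub (integrable_const _)).norm
            (((integrable_norm_std d).const_mul μ).const_mul L)
          exact hbound
      _ = L * (μ * ∫ u, ‖u‖ ∂(stdGaussian d)) := by
          rw [integral_const_mul, integral_const_mul]
      _ ≤ L * (μ * Real.sqrt d) := by
          gcongr
          exact integral_norm_le d
      _ = μ * L * Real.sqrt d := by ring
  refine ⟨hint, key, key.trans ?_⟩
  have h1 : Real.sqrt d ≤ Real.sqrt ((d : ℝ) + 3) := Real.sqrt_le_sqrt (by linarith)
  have h2 : ((d : ℝ) + 3) ^ ((3 : ℝ) / 2) = ((d : ℝ) + 3) * Real.sqrt ((d : ℝ) + 3) := by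
    rw [show (3 : ℝ) / 2 = 1 + 1 / 2 by norm_num,
      Real.rpow_add (by positivity), Real.rpow_one, Real.sqrt_eq_rpow]
  have h3 : Real.sqrt d ≤ 1 / 2 * (((d : ℝ) + 3) ^ ((3 : ℝ) / 2)) := by
    rw [h2]
    nlinarith [mul_nonneg (show (0 : ℝ) ≤ (d : ℝ) + 1 by positivity)
      (Real.sqrt_nonneg ((d : ℝ) + 3)), h1, Real.sqrt_nonneg ((d : ℝ) + 3)]
  calc μ * L * Real.sqrt d ≤ μ * L * (1 / 2 * (((d : ℝ) + 3) ^ ((3 : ℝ) / 2))) := by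
        apply mul_le_mul_of_nonneg_left h3 (mul_nonneg hμ hL)
    _ = μ / 2 * L * ((d : ℝ) + 3) ^ ((3 : ℝ) / 2) := by ring
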